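/- Let active be a finite set of coins and hc a finite set of address–coin pairs with C_a = {c : (a,c) ∈ hc}, and error sets M_Inact, M_Least, M_Most, M_Pairs defined as: M_Inact = {c ∉ active : ∃ a, c ∈ C_a}, M_Least = {c ∈ active : ∀ a, c ∉ C_a}, M_Most = {c : ∃ a ≠ b, c ∈ C_a ∧ c ∈ C_b}, M_Pairs = {(a,c) : c ∈ C_a ∧ ∃ b ≠ a, c ∈ C_b}. If M_Least = ∅, then Σ_a |C_a| = |active| + |M_Inact| + |M_Pairs| − |M_Most|. -/

import Mathlib

theorem stmt5 {Address Coin : Type*} [DecidableEq Address] [DecidableEq Coin]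
    (active : Finset Coin) (hc : Finset (Address × Coin))
    (C : Address → Finset Coin) (hC : ∀ a c, c ∈ C a ↔ (a, c) ∈ hc)
    (MInact MLeast MMost : Finset Coin) (MPairs : Finset (Address × Coin))
    (hInact : ∀ c, c ∈ MInact ↔ (c ∉ active ∧ ∃ a, c ∈ C a))
    (hLeast : ∀ c, c ∈ MLeast ↔ (c ∈ active ∧ ∀ a, c ∉ C a))
    (hMost : ∀ c, c ∈ MMost ↔ ∃ a b, a ≠ b ∧ c ∈ C a ∧ c ∈ C b)
    (hPairs : ∀ a c, (a, c) ∈ MPairs ↔ (c ∈ C a ∧ ∃ b, b ≠ a ∧ c ∈ C b))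
    (hEmpty : MLeast = ∅) :
    (∑ a ∈ hc.image Prod.fst, ((C a).card : ℤ))
      = (active.card : ℤ) + MInact.card + MPairs.card - MMost.card := by
  classical
  set owned := hc.image Prod.snd with howned
  -- Step 1: the sum equals |hc|
  have h1 : (∑ a ∈ hc.image Prod.fst, ((C a).card : ℤ)) = (hc.card : ℤ) := by
    have hfib := Finset.card_eq_sum_card_fiberwise
      (f := Prod.fst) (s := hc) (t := hc.image Prod.fst)
      (fun x hx => Finset.mem_image_of_mem _ hx)
    rw [hfib]
    push_cast
    refine Finset.sum_congr rfl (fun a _ => ?_)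
    congr 1
    refine Finset.card_bij (fun c _ => (a, c)) ?_ ?_ ?_
    · intro c hcm
      exact Finset.mem_filter.2 ⟨(hC a c).1 hcm, rfl⟩
    · intro c1 _ c2 _ h
      exact congrArg Prod.snd h
    · rintro ⟨p1, p2⟩ hp
      simp only [Finset.mem_filter] at hp
      obtain ⟨hmem, rfl⟩ := hp
      exact ⟨p2, (hC p1 p2).2 hmem, rfl⟩
  -- fiberwise count over coins
  have h2 : hc.card = ∑ c ∈ owned, (hc.filter (fun p => p.2 = c)).card :=
    Finset.card_eq_sum_card_fiberwise (fun x hx => Finset.mem_image_of_mem _ hx)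
  have hMMsub : MMost ⊆ owned := by
    intro c hcm
    obtain ⟨a, b, _, ha, _⟩ := (hMost c).1 hcm
    exact Finset.mem_image.2 ⟨(a, c), (hC a c).1 ha, rfl⟩
  -- MPairs = pairs of hc whose coin is in MMost
  have hPeq : MPairs = hc.filter (fun p => p.2 ∈ MMost) := by
    ext ⟨a, c⟩
    simp only [Finset.mem_filter, hPairs, hMost, ← hC]
    constructor
    · rintro ⟨ha, b, hb, hcb⟩
      exact ⟨ha, b, a, hb, hcb, ha⟩
    · rintro ⟨ha, x, y, hxy, hx, hy⟩
      refine ⟨ha, ?_⟩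
      by_cases hxa : x = a
      · exact ⟨y, fun h => hxy (hxa.trans h.symm), hy⟩
      · exact ⟨x, hxa, hx⟩
  have h3 : MPairs.card = ∑ c ∈ MMost, (hc.filter (fun p => p.2 = c)).card := by
    rw [hPeq]
    rw [Finset.card_eq_sum_card_fiberwise
      (f := Prod.snd) (s := hc.filter (fun p => p.2 ∈ MMost)) (t := MMost)
      (fun x hx => (Finset.mem_filter.1 hx).2)]
    refine Finset.sum_congr rfl (fun c hcm => ?_)
    congr 1
    rw [Finset.filter_filter]
    apply Finset.filter_congr
    intro p _
    constructor
    · exact fun h => h.2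
    · exact fun h => ⟨h ▸ hcm, h⟩
  -- singly-owned coins have fiber of size 1
  have h4 : ∀ c ∈ owned \ MMost, (hc.filter (fun p => p.2 = c)).card = 1 := by
    intro c hcm
    rw [Finset.mem_sdiff] at hcm
    have hnm := hcm.2
    obtain ⟨p, hac, hsnd⟩ := Finset.mem_image.1 hcm.1
    have hpc : (p.1, c) ∈ hc := by rw [← hsnd]; simpa using hac
    rw [Finset.card_eq_one]
    refine ⟨(p.1, c), ?_⟩
    ext ⟨b, d⟩
    simp only [Finset.mem_filter, Finset.mem_singleton, Prod.mk.injEq]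
    constructor
    · rintro ⟨hbd, hdc⟩
      refine ⟨?_, hdc⟩
      have hbd' : (b, c) ∈ hc := by rw [← hdc]; exact hbd
      by_contra hba
      exact hnm ((hMost c).2 ⟨b, p.1, hba, (hC b c).2 hbd', (hC p.1 c).2 hpc⟩)
    · rintro ⟨rfl, rfl⟩
      exact ⟨hpc, rfl⟩
  -- split the sum
  have h5 : ∑ c ∈ owned \ MMost, (hc.filter (fun p => p.2 = c)).card
      + ∑ c ∈ MMost, (hc.filter (fun p => p.2 = c)).card
      = ∑ c ∈ owned, (hc.filter (fun p => p.2 = c)).card :=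
    Finset.sum_sdiff hMMsub
  have h6 : ∑ c ∈ owned \ MMost, (hc.filter (fun p => p.2 = c)).card
      = (owned \ MMost).card := by
    rw [Finset.card_eq_sum_ones]
    exact Finset.sum_congr rfl h4
  have h7 : (owned \ MMost).card = owned.card - MMost.card :=
    Finset.card_sdiff_of_subset hMMsub
  -- owned = active ∪ MInact
  have hActSub : active ⊆ owned := by
    intro c hca
    by_contra hno
    have : ∀ a, c ∉ C a := by
      intro a ha
      exact hno (Finset.mem_image.2 ⟨(a, c), (hC a c).1 ha, rfl⟩)
    have : c ∈ MLeast := (hLeast c).2 ⟨hca, this⟩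
    rw [hEmpty] at this
    exact absurd this (Finset.notMem_empty c)
  have hInactEq : MInact = owned \ active := by
    ext c
    rw [hInact, Finset.mem_sdiff]
    constructor
    · rintro ⟨hna, a, ha⟩
      exact ⟨Finset.mem_image.2 ⟨(a, c), (hC a c).1 ha, rfl⟩, hna⟩
    · rintro ⟨ho, hna⟩
      obtain ⟨⟨a, c'⟩, hac, rfl⟩ := Finset.mem_image.1 ho
      exact ⟨hna, a, (hC a c').2 hac⟩
  have h8 : (owned \ active).card + active.card = owned.card :=
    Finset.card_sdiff_add_card_eq_card hActSub
  have hle : MMost.card ≤ owned.card := Finset.card_le_card hMMsub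
  rw [h1]
  rw [hInactEq]
  have := h5
  rw [h6, h7, ← h2] at this
  omega
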